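/- Let B = ℍ[ℚ, −a, −b] with a, b positive rationals, let O₂ be a subring of B, and let I be a ℤ-submodule of B with elements of nonzero reduced norm such that, for a positive integer N₁, every product x̄·y with x, y ∈ I lies in N₁·O₂. Let J ⊆ O₂ be a left O₂-submodule and let I·J denote the ℤ-span of products of elements of I with elements of J. Suppose γ₁ ∈ I satisfies Nrd(γ₁) = N₁·ℓ^{e₁} and γ₂ ∈ I·J satisfies Nrd(γ₂) = N₁·N_J·ℓ^{e₂}, where ℓ, N_J are positive rationals and e₁, e₂ natural numbers. Then γ := γ̄₁·γ₂·(1/N₁) lies in J and satisfies Nrd(γ) = N_J·ℓ^{e₁+e₂}. -/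

import Mathlib

open Quaternion

/-- The reduced norm on the quaternion algebra `ℍ[ℚ, a, b]`. -/
noncomputable def Nrd {a b : ℚ} (α : ℍ[ℚ, a, b]) : ℚ := (α * star α).re

lemma Nrd_mul {a b : ℚ} (x y : ℍ[ℚ, a, b]) : Nrd (x * y) = Nrd x * Nrd y := by
  have := QuaternionAlgebra.coe_injective (R := ℚ) (c₁ := a) (c₂ := 0) (c₃ := b)
  apply this
  unfold Nrd
  conv_lhs => rw [← QuaternionAlgebra.mul_star_eq_coe, star_mul, mul_assoc, ← mul_assoc y,
    y.mul_star_eq_coe, QuaternionAlgebra.coe_commutes, ← mul_assoc, x.mul_star_eq_coe,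
    ← QuaternionAlgebra.coe_mul]

lemma Nrd_star {a b : ℚ} (x : ℍ[ℚ, a, b]) : Nrd (star x) = Nrd x := by
  unfold Nrd
  rw [star_star, star_comm_self']

lemma Nrd_smul {a b : ℚ} (c : ℚ) (x : ℍ[ℚ, a, b]) : Nrd (c • x) = c ^ 2 * Nrd x := by
  unfold Nrd
  rw [QuaternionAlgebra.star_smul, smul_mul_smul_comm, QuaternionAlgebra.re_smul,
    smul_eq_mul, sq]

/-- Let `B = ℍ[ℚ, −a, −b]`, `O₂` a subring of `B`, `I` a `ℤ`-submodule of `B` whose nonzero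
elements have nonzero reduced norm, with `x̄·y ∈ N₁·O₂` for all `x, y ∈ I`.  Let `J ⊆ O₂` be a
left `O₂`-submodule and `I·J` the `ℤ`-span of products.  If `γ₁ ∈ I` has `Nrd γ₁ = N₁·ℓ^{e₁}`
and `γ₂ ∈ I·J` has `Nrd γ₂ = N₁·N_J·ℓ^{e₂}`, then `γ = γ̄₁·γ₂/N₁ ∈ J` and
`Nrd γ = N_J·ℓ^{e₁+e₂}`. -/
theorem reduction_to_special_order (a b : ℚ) (ha : 0 < a) (hb : 0 < b)
    (O₂ : Subring ℍ[ℚ, -a, -b])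
    (I : Submodule ℤ ℍ[ℚ, -a, -b])
    (hInorm : ∀ x ∈ I, x ≠ 0 → Nrd x ≠ 0)
    (N₁ : ℕ) (hN₁ : 0 < N₁)
    (hIO : ∀ x ∈ I, ∀ y ∈ I, ∃ z ∈ O₂, star x * y = (N₁ : ℍ[ℚ, -a, -b]) * z)
    (J : Set ℍ[ℚ, -a, -b])
    (hJO : J ⊆ (O₂ : Set ℍ[ℚ, -a, -b]))
    (hJ0 : (0 : ℍ[ℚ, -a, -b]) ∈ J)
    (hJadd : ∀ u ∈ J, ∀ v ∈ J, u + v ∈ J)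
    (hJneg : ∀ u ∈ J, -u ∈ J)
    (hJmod : ∀ o ∈ O₂, ∀ u ∈ J, o * u ∈ J)
    (ℓ NJ : ℚ) (hℓ : 0 < ℓ) (hNJ : 0 < NJ)
    (e₁ e₂ : ℕ)
    (γ₁ : ℍ[ℚ, -a, -b]) (hγ₁I : γ₁ ∈ I)
    (hγ₁ : Nrd γ₁ = (N₁ : ℚ) * ℓ ^ e₁)
    (γ₂ : ℍ[ℚ, -a, -b])
    (hγ₂IJ : γ₂ ∈ Submodule.span ℤ {z : ℍ[ℚ, -a, -b] | ∃ x ∈ I, ∃ y ∈ J, z = x * y})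
    (hγ₂ : Nrd γ₂ = (N₁ : ℚ) * NJ * ℓ ^ e₂) :
    ((N₁ : ℚ)⁻¹) • (star γ₁ * γ₂) ∈ J
      ∧ Nrd (((N₁ : ℚ)⁻¹) • (star γ₁ * γ₂)) = NJ * ℓ ^ (e₁ + e₂) := by

  have hN0 : (N₁ : ℚ) ≠ 0 := Nat.cast_ne_zero.mpr hN₁.ne'
  have hmem : ∀ w ∈ Submodule.span ℤ {z : ℍ[ℚ, -a, -b] | ∃ x ∈ I, ∃ y ∈ J, z = x * y},
      ((N₁ : ℚ)⁻¹) • (star γ₁ * w) ∈ J := by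
    intro w hw
    induction hw using Submodule.span_induction with
    | mem w hw =>
      obtain ⟨x, hx, y, hy, rfl⟩ := hw
      obtain ⟨z, hz, hzeq⟩ := hIO γ₁ hγ₁I x hx
      have : star γ₁ * (x * y) = (N₁ : ℚ) • (z * y) := by
        rw [← mul_assoc, hzeq, mul_assoc, Algebra.smul_def]
        norm_num
      rw [this, smul_smul, inv_mul_cancel₀ hN0, one_smul]
      exact hJmod z hz y hy
    | zero => simpa using hJ0
    | add u v hu hv hu' hv' =>
      have : ((N₁ : ℚ)⁻¹) • (star γ₁ * (u + v))
          = ((N₁ : ℚ)⁻¹) • (star γ₁ * u) + ((N₁ : ℚ)⁻¹) • (star γ₁ * v) := by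
        rw [mul_add, smul_add]
      rw [this]; exact hJadd _ hu' _ hv'
    | smul n u hu hu' =>
      have : ((N₁ : ℚ)⁻¹) • (star γ₁ * (n • u))
          = ((n : ℚ) : ℍ[ℚ, -a, -b]) * (((N₁ : ℚ)⁻¹) • (star γ₁ * u)) := by
        rw [mul_smul_comm, mul_smul_comm]
        push_cast
        rw [zsmul_eq_mul]
      rw [this]
      exact hJmod _ (by push_cast; exact intCast_mem O₂ n) _ hu'
  refine ⟨hmem γ₂ hγ₂IJ, ?_⟩
  rw [Nrd_smul, Nrd_mul, Nrd_star, hγ₁, hγ₂, pow_add]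
  field_simp
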